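/- Let C be a finite set of coupons with probabilities p : C → ℝ satisfying p o > 0 for all o and ∑ p o = 1. For m draws, the expected number of distinct coupons collected is E = ∑_{o ∈ C} (1 - (1 - p o)^m). Then for every natural number m ≥ 3, E ≤ (m / log₂ m) · H + 3, where H = ∑_{o ∈ C} p o · log₂(1 / p o) is the entropy. -/

import Mathlib

open Real Finset

lemma aux_key (m : ℕ) (hm : 3 ≤ m) {x : ℝ} (hx0 : 0 < x) (hx3 : x ≤ 1/3) :
    1 - (1 - x) ^ m ≤ ((m : ℝ) / Real.logb 2 m) * (x * Real.logb 2 (1 / x)) := by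
  have hm3 : (3:ℝ) ≤ m := by exact_mod_cast hm
  have hL : 1 < Real.logb 2 m := by
    rw [Real.lt_logb_iff_rpow_lt (by norm_num) (by linarith)]
    rw [Real.rpow_one]; linarith
  have hL0 : 0 < Real.logb 2 m := by linarith
  have hlog2 : (0:ℝ) < Real.log 2 := Real.log_pos (by norm_num)
  rcases le_or_gt x (1/(m:ℝ)) with h | h
  · -- Bernoulli case
    have hb' : 1 - (m:ℝ) * x ≤ (1 - x) ^ m := by
      have := one_add_mul_le_pow (a := -x) (by linarith) m
      simpa [sub_eq_add_neg] using this
    have h2 : Real.logb 2 m ≤ Real.logb 2 (1/x) := by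
      have hmx : (m:ℝ) ≤ 1/x := by
        rw [le_one_div (by linarith : (0:ℝ) < (m:ℝ)) hx0]
        exact h
      exact Real.logb_le_logb_of_le (by norm_num) (by linarith) hmx
    calc 1 - (1-x)^m ≤ (m:ℝ) * x := by linarith
      _ = ((m:ℝ) / Real.logb 2 m) * (x * Real.logb 2 m) := by field_simp
      _ ≤ ((m : ℝ) / Real.logb 2 m) * (x * Real.logb 2 (1 / x)) := by
          apply mul_le_mul_of_nonneg_left _ (by positivity)
          exact mul_le_mul_of_nonneg_left h2 hx0.le
  · -- concavity case
    have hpow : (0:ℝ) ≤ (1-x)^m := pow_nonneg (by linarith) m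
    have hmin : Real.log m / m ≤ Real.negMulLog x := by
      have hconc := Real.strictConcaveOn_negMulLog.concaveOn
      have hseg : x ∈ segment ℝ (1/(m:ℝ)) (1/3 : ℝ) := by
        rw [segment_eq_Icc (by rw [div_le_div_iff₀] <;> linarith)]
        exact ⟨h.le, hx3⟩
      have hkey := hconc.ge_on_segment (x := 1/(m:ℝ)) (y := (1/3:ℝ)) (z := x)
        (Set.mem_Ici.mpr (by positivity)) (Set.mem_Ici.mpr (by norm_num)) hseg
      have h3m : Real.log m / m ≤ Real.log 3 / 3 := by
        have := Real.log_div_self_antitoneOn (a := 3) (b := (m:ℝ))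
          (by simp only [Set.mem_Ici]; linarith [Real.exp_one_lt_d9])
          (by simp only [Set.mem_Ici]; linarith [Real.exp_one_lt_d9]) hm3
        simpa using this
      have e1 : Real.negMulLog (1/(m:ℝ)) = Real.log m / m := by
        rw [Real.negMulLog, one_div, Real.log_inv]
        field_simp
      have e2 : Real.negMulLog (1/3:ℝ) = Real.log 3 / 3 := by
        rw [Real.negMulLog, one_div, Real.log_inv]
        field_simp
      rw [e1, e2] at hkey
      calc Real.log m / m ≤ min (Real.log m / m) (Real.log 3 / 3) := by
            simp only [le_min_iff]; exact ⟨le_refl _, h3m⟩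
        _ ≤ _ := hkey
    have hent : Real.logb 2 m / m ≤ x * Real.logb 2 (1/x) := by
      have e3 : x * Real.logb 2 (1/x) = (-x * Real.log x) / Real.log 2 := by
        rw [Real.logb, Real.log_div one_ne_zero hx0.ne', Real.log_one]; ring
      have e4 : Real.logb 2 m / m = (Real.log m / m) / Real.log 2 := by
        rw [Real.logb]; ring
      rw [e3, e4]
      rw [Real.negMulLog] at hmin
      gcongr
    calc 1 - (1-x)^m ≤ 1 := by linarith
      _ = ((m:ℝ) / Real.logb 2 m) * (Real.logb 2 m / m) := by field_simp
      _ ≤ _ := mul_le_mul_of_nonneg_left hent (by positivity)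

theorem stmt_4 {C : Type*} [Fintype C] (p : C → ℝ)
    (hp : ∀ o, 0 < p o) (hsum : ∑ o, p o = 1) (m : ℕ) (hm : 3 ≤ m) :
    ∑ o, (1 - (1 - p o) ^ m) ≤
      ((m : ℝ) / Real.logb 2 m) * (∑ o, p o * Real.logb 2 (1 / p o)) + 3 := by
  have hm3 : (3:ℝ) ≤ m := by exact_mod_cast hm
  have hL : 1 < Real.logb 2 m := by
    rw [Real.lt_logb_iff_rpow_lt (by norm_num) (by linarith)]
    rw [Real.rpow_one]; linarith
  have hc : 0 ≤ (m:ℝ) / Real.logb 2 m := by positivity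
  have hp1 : ∀ o, p o ≤ 1 := by
    intro o
    rw [← hsum]
    exact Finset.single_le_sum (fun i _ => (hp i).le) (Finset.mem_univ o)
  have hbound : ∀ o, 1 - (1 - p o) ^ m ≤
      ((m:ℝ) / Real.logb 2 m) * (p o * Real.logb 2 (1 / p o)) +
        (if p o ≤ 1/3 then (0:ℝ) else 1) := by
    intro o
    by_cases h : p o ≤ 1/3
    · simp only [h, if_true, add_zero]
      exact aux_key m hm (hp o) h
    · simp only [h, if_false]
      have h1 : (0:ℝ) ≤ (1 - p o) ^ m := pow_nonneg (by linarith [hp1 o]) m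
      have h2 : 0 ≤ Real.logb 2 (1 / p o) :=
        Real.logb_nonneg (by norm_num) (by rw [le_one_div one_pos (hp o), div_one]; exact hp1 o)
      have h3 : 0 ≤ ((m:ℝ) / Real.logb 2 m) * (p o * Real.logb 2 (1 / p o)) := by
        apply mul_nonneg hc (mul_nonneg (hp o).le h2)
      linarith
  calc ∑ o, (1 - (1 - p o) ^ m)
      ≤ ∑ o, (((m:ℝ) / Real.logb 2 m) * (p o * Real.logb 2 (1 / p o)) +
        (if p o ≤ 1/3 then (0:ℝ) else 1)) := Finset.sum_le_sum (fun o _ => hbound o)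
    _ = ((m : ℝ) / Real.logb 2 m) * (∑ o, p o * Real.logb 2 (1 / p o)) +
        ∑ o, (if p o ≤ 1/3 then (0:ℝ) else 1) := by
        rw [Finset.sum_add_distrib, Finset.mul_sum]
    _ ≤ ((m : ℝ) / Real.logb 2 m) * (∑ o, p o * Real.logb 2 (1 / p o)) + 3 := by
        gcongr
        set s := Finset.univ.filter (fun o => ¬ p o ≤ 1/3) with hs
        have e : ∑ o, (if p o ≤ 1/3 then (0:ℝ) else 1) = s.card := by
          rw [Finset.sum_ite, Finset.sum_const, Finset.sum_const]
          simp [hs]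
        rw [e]
        have hcard : (s.card : ℝ) * (1/3) ≤ 1 := by
          calc (s.card : ℝ) * (1/3) ≤ ∑ o ∈ s, p o := by
                rw [Finset.card_eq_sum_ones, Nat.cast_sum]
                push_cast
                rw [Finset.sum_mul]
                apply Finset.sum_le_sum
                intro i hi
                rw [hs, Finset.mem_filter] at hi
                linarith [hi.2]
            _ ≤ ∑ o, p o := Finset.sum_le_sum_of_subset_of_nonneg
                (Finset.subset_univ s) (fun i _ _ => (hp i).le)
            _ = 1 := hsum
        linarith
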